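/- Let α ∈ (0,1). CVaR_α is subadditive under the Rockafellar–Uryasev representation: for integrable real random variables L₁, L₂ (on the same probability space), CVaR_α(L₁ + L₂) ≤ CVaR_α(L₁) + CVaR_α(L₂). -/

import Mathlib

open MeasureTheory

lemma cvar_aux_bdd {Ω : Type*} [MeasurableSpace Ω] (μ : Measure Ω) [IsProbabilityMeasure μ]
    (L : Ω → ℝ) (hL : Integrable L μ) {α : ℝ} (hα0 : 0 < α) (hα1 : α < 1) (t : ℝ) :
    ∫ ω, L ω ∂μ ≤ t + (1 / α) * ∫ ω, max (L ω - t) 0 ∂μ := by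
  have hint : Integrable (fun ω => max (L ω - t) 0) μ :=
    (hL.sub (integrable_const t)).pos_part
  have hnn : 0 ≤ ∫ ω, max (L ω - t) 0 ∂μ :=
    integral_nonneg fun ω => le_max_right _ _
  have h1α : 1 ≤ 1 / α := by
    rw [le_div_iff₀ hα0]; linarith
  have h2 : ∫ ω, max (L ω - t) 0 ∂μ ≤ (1 / α) * ∫ ω, max (L ω - t) 0 ∂μ := by
    nlinarith
  have hsub : Integrable (fun ω => L ω - t) μ := hL.sub (integrable_const t)
  have h3 : (∫ ω, L ω ∂μ) - t ≤ ∫ ω, max (L ω - t) 0 ∂μ := by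
    have := integral_mono hsub hint (fun ω => le_max_left (L ω - t) 0)
    rwa [integral_sub hL (integrable_const t), integral_const, probReal_univ,
      smul_eq_mul, one_mul] at this
  linarith

/-- CVaR is subadditive: `CVaR_α(L₁ + L₂) ≤ CVaR_α(L₁) + CVaR_α(L₂)`. -/
theorem cvar_subadditive
    {Ω : Type*} [MeasurableSpace Ω] (μ : Measure Ω) [IsProbabilityMeasure μ]
    (L₁ L₂ : Ω → ℝ) (hL₁ : Integrable L₁ μ) (hL₂ : Integrable L₂ μ)
    (α : ℝ) (hα0 : 0 < α) (hα1 : α < 1) :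
    (⨅ t : ℝ, (t + (1 / α) * ∫ ω, max (L₁ ω + L₂ ω - t) 0 ∂μ))
      ≤ (⨅ t : ℝ, (t + (1 / α) * ∫ ω, max (L₁ ω - t) 0 ∂μ))
        + (⨅ t : ℝ, (t + (1 / α) * ∫ ω, max (L₂ ω - t) 0 ∂μ)) := by
  have hbdd : BddBelow (Set.range fun t : ℝ =>
      t + (1 / α) * ∫ ω, max (L₁ ω + L₂ ω - t) 0 ∂μ) := by
    refine ⟨∫ ω, (L₁ ω + L₂ ω) ∂μ, ?_⟩
    rintro x ⟨t, rfl⟩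
    exact cvar_aux_bdd μ (fun ω => L₁ ω + L₂ ω) (hL₁.add hL₂) hα0 hα1 t
  refine le_ciInf_add_ciInf fun t s => ?_
  refine ciInf_le_of_le hbdd (t + s) ?_
  have hint1 : Integrable (fun ω => max (L₁ ω - t) 0) μ :=
    (hL₁.sub (integrable_const t)).pos_part
  have hint2 : Integrable (fun ω => max (L₂ ω - s) 0) μ :=
    (hL₂.sub (integrable_const s)).pos_part
  have hint12 : Integrable (fun ω => max (L₁ ω + L₂ ω - (t + s)) 0) μ :=
    ((hL₁.add hL₂).sub (integrable_const (t + s))).pos_part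
  have hmono : ∫ ω, max (L₁ ω + L₂ ω - (t + s)) 0 ∂μ
      ≤ ∫ ω, (max (L₁ ω - t) 0 + max (L₂ ω - s) 0) ∂μ := by
    refine integral_mono hint12 (hint1.add hint2) fun ω => ?_
    have : L₁ ω + L₂ ω - (t + s) = (L₁ ω - t) + (L₂ ω - s) := by ring
    rw [this]
    exact max_le (add_le_add (le_max_left _ _) (le_max_left _ _))
      (by positivity)
  rw [integral_add hint1 hint2] at hmono
  have hα : 0 ≤ 1 / α := by positivity
  nlinarith [mul_le_mul_of_nonneg_left hmono hα]
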